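/- Let $T$ be a $\{-1,1\}$-valued random variable, $X$ a random variable, and $R$ an integrable random variable, with $\pi(t, x) = P(T = t \mid X = x) > 0$. For any measurable decision rule $d: \mathcal{X} \to \{-1, 1\}$, under the assumption that the conditional distribution of $R$ given $(X, T)$ has mean $Q(X, T)$, the inverse-probability-weighted quantity satisfies $\mathbb{E}\left[\frac{R\, \mathbb{1}\{T = d(X)\}}{\pi(T, X)}\right] = \mathbb{E}\left[Q(X, d(X))\right]$. -/

import Mathlib

open MeasureTheory

theorem ipw_value_identity
    {Ω 𝓧 : Type*} [MeasurableSpace Ω] [MeasurableSpace 𝓧]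
    (μ : Measure Ω) [IsProbabilityMeasure μ]
    (X : Ω → 𝓧) (T : Ω → ℝ) (R : Ω → ℝ)
    (hX : Measurable X) (hT : Measurable T) (hR : Integrable R μ)
    (hTval : ∀ ω, T ω = 1 ∨ T ω = -1)
    (π : ℝ → 𝓧 → ℝ) (Q : 𝓧 → ℝ → ℝ)
    (hπmeas : ∀ t, Measurable (π t)) (hQmeas : ∀ t, Measurable (fun x => Q x t))
    (ε : ℝ) (hε : 0 < ε)
    (hpos : ∀ x, ∀ t : ℝ, (t = 1 ∨ t = -1) → ε ≤ π t x)
    -- π is the conditional probability of T = t given X: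
    (hπ : ∀ t : ℝ, (t = 1 ∨ t = -1) → ∀ h : 𝓧 → ℝ, Measurable h → (∀ x, |h x| ≤ 1) →
      ∫ ω, (if T ω = t then (1 : ℝ) else 0) * h (X ω) ∂μ
        = ∫ ω, π t (X ω) * h (X ω) ∂μ)
    -- Q is the conditional mean of R given X and T:
    (hQ : ∀ t : ℝ, (t = 1 ∨ t = -1) → ∀ h : 𝓧 → ℝ, Measurable h → (∀ x, |h x| ≤ 1) →
      ∫ ω, R ω * (if T ω = t then (1 : ℝ) else 0) * h (X ω) ∂μ
        = ∫ ω, Q (X ω) t * π t (X ω) * h (X ω) ∂μ)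
    (d : 𝓧 → ℝ) (hd : Measurable d) (hdval : ∀ x, d x = 1 ∨ d x = -1) :
    ∫ ω, R ω * (if T ω = d (X ω) then (1 : ℝ) else 0) / π (T ω) (X ω) ∂μ
      = ∫ ω, Q (X ω) (d (X ω)) ∂μ := by
  classical
  have hπpos : ∀ (t : ℝ), (t = 1 ∨ t = -1) → ∀ x, 0 < π t x :=
    fun t ht x => lt_of_lt_of_le hε (hpos x t ht)
  -- the 𝓧-level truncated functions
  have hvmeas : ∀ t : ℝ, Measurable (fun x => Q x t * (if d x = t then (1:ℝ) else 0)) := by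
    intro t
    exact (hQmeas t).mul
      (Measurable.ite (hd (measurableSet_singleton t)) measurable_const measurable_const)
  -- integrability of ω ↦ Q (X ω) t * 1{d (X ω) = t}
  have hint : ∀ t : ℝ, (t = 1 ∨ t = -1) →
      Integrable (fun ω => Q (X ω) t * (if d (X ω) = t then (1:ℝ) else 0)) μ := by
    intro t ht
    set v : 𝓧 → ℝ := fun x => Q x t * (if d x = t then (1:ℝ) else 0) with hv
    have hmeasvX : Measurable fun ω => v (X ω) := (hvmeas t).comp hX
    -- sign function
    set s : 𝓧 → ℝ := fun x => if 0 ≤ Q x t then 1 else -1 with hs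
    have hsmeas : Measurable s :=
      Measurable.ite (measurableSet_le measurable_const (hQmeas t))
        measurable_const measurable_const
    have hQs : ∀ x, Q x t * s x = |Q x t| := by
      intro x
      by_cases h : 0 ≤ Q x t
      · simp [hs, h, abs_of_nonneg h]
      · push_neg at h
        simp [hs, not_le.mpr h, abs_of_neg h]
    -- truncation bound
    have key : ∀ n : ℕ, ∫ ω, |v (X ω)| * (if |v (X ω)| ≤ (n:ℝ) then (1:ℝ) else 0) ∂μ
        ≤ (∫ ω, |R ω| ∂μ) / ε := by
      intro n
      set h : 𝓧 → ℝ :=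
        fun x => ε * ((if d x = t then (1:ℝ) else 0) *
          ((if |v x| ≤ (n:ℝ) then (1:ℝ) else 0) * s x)) / π t x with hh
      have hhmeas : Measurable h := by
        apply Measurable.div _ (hπmeas t)
        apply Measurable.mul measurable_const
        apply Measurable.mul
        · exact Measurable.ite (hd (measurableSet_singleton t)) measurable_const measurable_const
        · apply Measurable.mul _ hsmeas
          exact Measurable.ite (measurableSet_le (hvmeas t).abs measurable_const)
            measurable_const measurable_const
      have hhbd : ∀ x, |h x| ≤ 1 := by
        intro x
        have hπp := hπpos t ht x
        rw [hh]
        simp only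
        rw [abs_div, abs_of_pos hπp, div_le_one hπp, abs_mul, abs_of_pos hε]
        calc ε * |(if d x = t then (1:ℝ) else 0) *
              ((if |v x| ≤ (n:ℝ) then (1:ℝ) else 0) * s x)| ≤ ε * 1 := by
              gcongr
              rw [abs_mul, abs_mul]
              have h1 : |(if d x = t then (1:ℝ) else 0)| ≤ 1 := by
                by_cases hb : d x = t <;> simp [hb]
              have h2 : |(if |v x| ≤ (n:ℝ) then (1:ℝ) else 0)| ≤ 1 := by
                by_cases hb : |v x| ≤ (n:ℝ) <;> simp [hb]
              have h3 : |s x| ≤ 1 := by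
                rw [hs]; by_cases hb : 0 ≤ Q x t <;> simp [hb]
              calc |(if d x = t then (1:ℝ) else 0)| *
                    (|(if |v x| ≤ (n:ℝ) then (1:ℝ) else 0)| * |s x|) ≤ 1 * (1 * 1) := by
                    gcongr
                _ = 1 := by ring
          _ ≤ π t x := by rw [mul_one]; exact hpos x t ht
      have h1 := hQ t ht h hhmeas hhbd
      have h2 : ∀ x, Q x t * π t x * h x
          = ε * (|v x| * (if |v x| ≤ (n:ℝ) then (1:ℝ) else 0)) := by
        intro x
        have hπne : (π t x) ≠ 0 := ne_of_gt (hπpos t ht x)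
        rw [hh]
        simp only
        by_cases hdx : d x = t
        · have hvx : |v x| = |Q x t| := by simp [hv, hdx]
          rw [hvx, if_pos hdx, ← hQs x]
          field_simp
        · have hvx : v x = 0 := by simp [hv, hdx]
          rw [if_neg hdx, hvx]
          simp
      have h3 : ∫ ω, Q (X ω) t * π t (X ω) * h (X ω) ∂μ
          = ε * ∫ ω, |v (X ω)| * (if |v (X ω)| ≤ (n:ℝ) then (1:ℝ) else 0) ∂μ := by
        rw [← integral_const_mul]
        exact integral_congr_ae (Filter.Eventually.of_forall fun ω => h2 (X ω))
      have h4 : ε * ∫ ω, |v (X ω)| * (if |v (X ω)| ≤ (n:ℝ) then (1:ℝ) else 0) ∂μ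
          ≤ ∫ ω, |R ω| ∂μ := by
        rw [← h3, ← h1]
        calc ∫ ω, R ω * (if T ω = t then (1:ℝ) else 0) * h (X ω) ∂μ
            ≤ ∫ ω, |R ω * (if T ω = t then (1:ℝ) else 0) * h (X ω)| ∂μ := by
              have := norm_integral_le_integral_norm
                (fun ω => R ω * (if T ω = t then (1:ℝ) else 0) * h (X ω)) (μ := μ)
              simp only [Real.norm_eq_abs] at this
              exact le_trans (le_abs_self _) this
          _ ≤ ∫ ω, |R ω| ∂μ := by
              apply integral_mono_of_nonneg
                (Filter.Eventually.of_forall fun ω => abs_nonneg _) hR.abs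
              apply Filter.Eventually.of_forall
              intro ω
              simp only
              have hb1 : |(if T ω = t then (1:ℝ) else 0)| ≤ 1 := by
                by_cases hb : T ω = t <;> simp [hb]
              have hb2 : |h (X ω)| ≤ 1 := hhbd (X ω)
              calc |(R ω * if T ω = t then (1:ℝ) else 0) * h (X ω)|
                  = |R ω| * (|(if T ω = t then (1:ℝ) else 0)| * |h (X ω)|) := by
                    rw [abs_mul, abs_mul, mul_assoc]
                _ ≤ |R ω| * (1 * 1) := by
                    apply mul_le_mul_of_nonneg_left _ (abs_nonneg _)
                    exact mul_le_mul hb1 hb2 (abs_nonneg _) (by norm_num)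
                _ = |R ω| := by ring
      rw [le_div_iff₀ hε]
      calc (∫ ω, |v (X ω)| * (if |v (X ω)| ≤ (n:ℝ) then (1:ℝ) else 0) ∂μ) * ε
          = ε * ∫ ω, |v (X ω)| * (if |v (X ω)| ≤ (n:ℝ) then (1:ℝ) else 0) ∂μ := by ring
        _ ≤ ∫ ω, |R ω| ∂μ := h4
    -- monotone convergence
    set F : ℕ → Ω → ENNReal :=
      fun n ω => ENNReal.ofReal (|v (X ω)| * (if |v (X ω)| ≤ (n:ℝ) then (1:ℝ) else 0)) with hF
    have hFmeas : ∀ n, Measurable (F n) := by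
      intro n
      apply ENNReal.measurable_ofReal.comp
      exact hmeasvX.abs.mul
        (Measurable.ite (measurableSet_le hmeasvX.abs measurable_const)
          measurable_const measurable_const)
    have hFmono : Monotone F := by
      intro n m hnm ω
      apply ENNReal.ofReal_le_ofReal
      by_cases hb : |v (X ω)| ≤ (n:ℝ)
      · have hb' : |v (X ω)| ≤ (m:ℝ) := le_trans hb (by exact_mod_cast hnm)
        rw [if_pos hb, if_pos hb']
      · rw [if_neg hb, mul_zero]
        positivity
    have hFsup : ∀ ω, (⨆ n, F n ω) = ENNReal.ofReal |v (X ω)| := by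
      intro ω
      apply le_antisymm
      · apply iSup_le
        intro n
        apply ENNReal.ofReal_le_ofReal
        by_cases hb : |v (X ω)| ≤ (n:ℝ) <;> simp [hb, abs_nonneg]
      · refine le_trans (le_of_eq ?_) (le_iSup (fun n => F n ω) ⌈|v (X ω)|⌉₊)
        rw [hF]
        simp only
        rw [if_pos (Nat.le_ceil _), mul_one]
    have hgint : ∀ n : ℕ,
        Integrable (fun ω => |v (X ω)| * (if |v (X ω)| ≤ (n:ℝ) then (1:ℝ) else 0)) μ := by
      intro n
      apply (integrable_const (n:ℝ)).mono'
      · exact (hmeasvX.abs.mul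
          (Measurable.ite (measurableSet_le hmeasvX.abs measurable_const)
            measurable_const measurable_const)).aestronglyMeasurable
      · apply Filter.Eventually.of_forall
        intro ω
        rw [Real.norm_eq_abs]
        by_cases hb : |v (X ω)| ≤ (n:ℝ)
        · rw [if_pos hb, mul_one, abs_abs]; exact hb
        · rw [if_neg hb, mul_zero, abs_zero]
          exact Nat.cast_nonneg n
    constructor
    · exact hmeasvX.aestronglyMeasurable
    · rw [hasFiniteIntegral_iff_norm]
      calc ∫⁻ ω, ENNReal.ofReal ‖v (X ω)‖ ∂μ = ∫⁻ ω, ⨆ n, F n ω ∂μ := by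
            apply lintegral_congr
            intro ω
            rw [hFsup ω, Real.norm_eq_abs]
        _ = ⨆ n, ∫⁻ ω, F n ω ∂μ := lintegral_iSup hFmeas hFmono
        _ ≤ ENNReal.ofReal ((∫ ω, |R ω| ∂μ) / ε) := by
            apply iSup_le
            intro n
            rw [hF]
            simp only
            rw [← ofReal_integral_eq_lintegral_ofReal (hgint n)]
            · exact ENNReal.ofReal_le_ofReal (key n)
            · apply Filter.Eventually.of_forall
              intro ω
              by_cases hb : |v (X ω)| ≤ (n:ℝ) <;> simp [hb, abs_nonneg]
        _ < ⊤ := ENNReal.ofReal_lt_top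
  -- main test functions
  set H : ℝ → 𝓧 → ℝ := fun t x => ε * (if d x = t then (1:ℝ) else 0) / π t x with hH
  have hHmeas : ∀ t, Measurable (H t) := by
    intro t
    exact (measurable_const.mul
      (Measurable.ite (hd (measurableSet_singleton t)) measurable_const measurable_const)).div
      (hπmeas t)
  have hHbd : ∀ t : ℝ, (t = 1 ∨ t = -1) → ∀ x, |H t x| ≤ 1 := by
    intro t ht x
    have hπp := hπpos t ht x
    rw [hH]
    simp only
    rw [abs_div, abs_of_pos hπp, div_le_one hπp, abs_mul, abs_of_pos hε]
    calc ε * |(if d x = t then (1:ℝ) else 0)| ≤ ε * 1 := by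
          gcongr
          by_cases hb : d x = t <;> simp [hb]
      _ ≤ π t x := by rw [mul_one]; exact hpos x t ht
  have hRHS : ∀ t : ℝ, (t = 1 ∨ t = -1) → ∀ x,
      Q x t * π t x * H t x = ε * (Q x t * (if d x = t then (1:ℝ) else 0)) := by
    intro t ht x
    have hπne : π t x ≠ 0 := ne_of_gt (hπpos t ht x)
    rw [hH]
    simp only
    field_simp
  have hQside : ∀ t : ℝ, (ht : t = 1 ∨ t = -1) →
      ∫ ω, R ω * (if T ω = t then (1:ℝ) else 0) * H t (X ω) ∂μ
        = ε * ∫ ω, Q (X ω) t * (if d (X ω) = t then (1:ℝ) else 0) ∂μ := by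
    intro t ht
    rw [hQ t ht (H t) (hHmeas t) (hHbd t ht), ← integral_const_mul]
    exact integral_congr_ae (Filter.Eventually.of_forall fun ω => hRHS t ht (X ω))
  have hintL : ∀ t : ℝ, (t = 1 ∨ t = -1) →
      Integrable (fun ω => R ω * (if T ω = t then (1:ℝ) else 0) * H t (X ω)) μ := by
    intro t ht
    have h1 : Integrable (fun ω => ((if T ω = t then (1:ℝ) else 0) * H t (X ω)) * R ω) μ := by
      apply hR.bdd_mul (c := 1)
      · exact ((Measurable.ite (hT (measurableSet_singleton t)) measurable_const
          measurable_const).mul ((hHmeas t).comp hX)).aestronglyMeasurable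
      · refine Filter.Eventually.of_forall (fun ω => ?_)
        rw [Real.norm_eq_abs, abs_mul]
        have hb1 : |(if T ω = t then (1:ℝ) else 0)| ≤ 1 := by
          by_cases hb : T ω = t <;> simp [hb]
        calc |(if T ω = t then (1:ℝ) else 0)| * |H t (X ω)| ≤ 1 * 1 :=
              mul_le_mul hb1 (hHbd t ht (X ω)) (abs_nonneg _) (by norm_num)
          _ = 1 := by ring
    exact h1.congr (Filter.Eventually.of_forall fun ω => by ring)
  have hne1 : ((1:ℝ)) ≠ -1 := by norm_num
  have hne2 : ((-1:ℝ)) ≠ 1 := by norm_num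
  have hεne : ε ≠ 0 := ne_of_gt hε
  have hLHS : ∀ ω, R ω * (if T ω = d (X ω) then (1:ℝ) else 0) / π (T ω) (X ω)
      = ε⁻¹ * (R ω * (if T ω = 1 then (1:ℝ) else 0) * H 1 (X ω)
             + R ω * (if T ω = (-1:ℝ) then (1:ℝ) else 0) * H (-1) (X ω)) := by
    intro ω
    have hπ1 : π 1 (X ω) ≠ 0 := ne_of_gt (hπpos 1 (Or.inl rfl) (X ω))
    have hπ2 : π (-1) (X ω) ≠ 0 := ne_of_gt (hπpos (-1) (Or.inr rfl) (X ω))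
    rw [hH]
    rcases hTval ω with h | h <;> rcases hdval (X ω) with h' | h' <;>
      simp only [h, h', if_pos rfl, if_neg hne1, if_neg hne2] <;>
      field_simp <;> simp
  calc ∫ ω, R ω * (if T ω = d (X ω) then (1:ℝ) else 0) / π (T ω) (X ω) ∂μ
      = ∫ ω, ε⁻¹ * (R ω * (if T ω = 1 then (1:ℝ) else 0) * H 1 (X ω)
             + R ω * (if T ω = (-1:ℝ) then (1:ℝ) else 0) * H (-1) (X ω)) ∂μ :=
        integral_congr_ae (Filter.Eventually.of_forall hLHS)
    _ = ε⁻¹ * ((∫ ω, R ω * (if T ω = 1 then (1:ℝ) else 0) * H 1 (X ω) ∂μ)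
             + ∫ ω, R ω * (if T ω = (-1:ℝ) then (1:ℝ) else 0) * H (-1) (X ω) ∂μ) := by
        rw [integral_const_mul, integral_add (hintL 1 (Or.inl rfl)) (hintL (-1) (Or.inr rfl))]
    _ = ε⁻¹ * ((ε * ∫ ω, Q (X ω) 1 * (if d (X ω) = 1 then (1:ℝ) else 0) ∂μ)
             + ε * ∫ ω, Q (X ω) (-1) * (if d (X ω) = (-1:ℝ) then (1:ℝ) else 0) ∂μ) := by
        rw [hQside 1 (Or.inl rfl), hQside (-1) (Or.inr rfl)]
    _ = (∫ ω, Q (X ω) 1 * (if d (X ω) = 1 then (1:ℝ) else 0) ∂μ)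
             + ∫ ω, Q (X ω) (-1) * (if d (X ω) = (-1:ℝ) then (1:ℝ) else 0) ∂μ := by
        field_simp
    _ = ∫ ω, (Q (X ω) 1 * (if d (X ω) = 1 then (1:ℝ) else 0)
             + Q (X ω) (-1) * (if d (X ω) = (-1:ℝ) then (1:ℝ) else 0)) ∂μ :=
        (integral_add (hint 1 (Or.inl rfl)) (hint (-1) (Or.inr rfl))).symm
    _ = ∫ ω, Q (X ω) (d (X ω)) ∂μ := by
        apply integral_congr_ae
        apply Filter.Eventually.of_forall
        intro ω
        rcases hdval (X ω) with h' | h' <;>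
          simp [h', hne1, hne2]
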